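/- Randomized schedulers are strictly more expressive than deterministic ones for PHL: there exist an MDP M and a PHL formula Φ = ∃σ. ∃π_1:σ. ∃π_2:σ. X(a_{π_1} ∧ ¬a_{π_2}) such that M satisfies Φ when scheduler quantifiers range over all (possibly randomized) schedulers, but M does not satisfy Φ when scheduler quantifiers range over deterministic schedulers only. Concretely, for the three-state MDP with initial state s_0, two actions α_1, α_2 leading deterministically from s_0 to s_1 (labelled {a}) and s_2 (labelled ∅) respectively, each absorbing: (1) the uniform randomized scheduler induces a Markov chain containing both a path whose second state is labelled {a} and a path whose second state is labelled ∅; (2) every deterministic scheduler induces a Markov chain with exactly one infinite path. -/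
import Mathlib


namespace PHLStmt15

/-- The transition probability function of the three-state MDP: from `s₀ = 0`,
action `α₁ = 0` leads to `s₁ = 1` and action `α₂ = 1` leads to `s₂ = 2`, each with
probability 1; `s₁` and `s₂` are absorbing (under `α₁` resp. `α₂`). -/
def P : Fin 3 → Fin 2 → Fin 3 → ℝ := fun s a t =>
  if (s, a, t) ∈ ({((0 : Fin 3), (0 : Fin 2), (1 : Fin 3)),
                   ((0 : Fin 3), (1 : Fin 2), (2 : Fin 3)),
                   ((1 : Fin 3), (0 : Fin 2), (1 : Fin 3)),
                   ((2 : Fin 3), (1 : Fin 2), (2 : Fin 3))} : Finset (Fin 3 × Fin 2 × Fin 3))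
  then 1 else 0

/-- The labelling: proposition `a` holds exactly in state `s₁ = 1`. -/
def LabelA (s : Fin 3) : Prop := s = 1

/-- The history of states of a path up to time `i` (proper prefix, current state). -/
def histOf (π : ℕ → Fin 3) (i : ℕ) : List (Fin 3) × Fin 3 :=
  (List.ofFn (fun j : Fin i => π j), π i)

/-- A scheduler maps finite state-histories to distributions over the two actions. -/
def IsSched (σ : (List (Fin 3) × Fin 3) → Fin 2 → ℝ) : Prop :=
  ∀ h : List (Fin 3) × Fin 3,
    (∀ a : Fin 2, 0 ≤ σ h a) ∧ (∑ a : Fin 2, σ h a = 1)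
    ∧ (∀ a : Fin 2, 0 < σ h a → 0 < ∑ t : Fin 3, P h.2 a t)

/-- A scheduler is deterministic if every history is mapped to a point mass. -/
def IsDet (σ : (List (Fin 3) × Fin 3) → Fin 2 → ℝ) : Prop :=
  ∀ h : List (Fin 3) × Fin 3, ∃ a : Fin 2, σ h a = 1 ∧ ∀ b : Fin 2, b ≠ a → σ h b = 0

/-- An infinite path of the Markov chain `M_σ` induced by scheduler `σ`: it starts in
the initial state `s₀ = 0` and every step has positive induced transition
probability `P_σ(h, h·s') = ∑ a, σ(h)(a) · P(last h, a, s')`. -/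
def IsInducedPath (σ : (List (Fin 3) × Fin 3) → Fin 2 → ℝ) (π : ℕ → Fin 3) : Prop :=
  π 0 = 0 ∧ ∀ i : ℕ, 0 < ∑ a : Fin 2, σ (histOf π i) a * P (π i) a (π (i + 1))

/-- The uniform randomized scheduler: each action with probability 1/2. -/
noncomputable def uniform : (List (Fin 3) × Fin 3) → Fin 2 → ℝ := fun _ _ => 1 / 2


/-- Auxiliary: deterministic successor map on enabled pairs. -/
def nxt : Fin 3 → Fin 2 → Fin 3 := fun s a => if s = 0 then (if a = 0 then 1 else 2) else s

lemma P_nonneg (s : Fin 3) (a : Fin 2) (t : Fin 3) : 0 ≤ P s a t := by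
  unfold P; split <;> norm_num

lemma nxt_spec (s : Fin 3) (a : Fin 2) (h : 0 < ∑ t : Fin 3, P s a t) :
    P s a (nxt s a) = 1 := by
  fin_cases s <;> fin_cases a <;>
    simp_all [P, nxt, Fin.sum_univ_three, Prod.ext_iff]

lemma nxt_uniq (s : Fin 3) (a : Fin 2) (t : Fin 3) (h : 0 < P s a t) : t = nxt s a := by
  fin_cases s <;> fin_cases a <;> fin_cases t <;>
    simp_all [P, nxt, Prod.ext_iff]

/-- Auxiliary: the canonical history sequence of a deterministic scheduler. -/
noncomputable def hist (σ : (List (Fin 3) × Fin 3) → Fin 2 → ℝ) (hdet : IsDet σ) :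
    ℕ → List (Fin 3) × Fin 3
  | 0 => ([], 0)
  | n + 1 =>
      ((hist σ hdet n).1 ++ [(hist σ hdet n).2],
       nxt (hist σ hdet n).2 (hdet (hist σ hdet n)).choose)

/-- Auxiliary: the canonical induced path of a deterministic scheduler. -/
noncomputable def rho (σ : (List (Fin 3) × Fin 3) → Fin 2 → ℝ) (hdet : IsDet σ)
    (n : ℕ) : Fin 3 := (hist σ hdet n).2

lemma histOf_congr (π π' : ℕ → Fin 3) (n : ℕ) (h : ∀ j ≤ n, π j = π' j) :
    histOf π n = histOf π' n := by
  unfold histOf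
  refine Prod.ext ?_ (h n le_rfl)
  simp only
  congr 1
  funext j
  exact h j (le_of_lt j.2)

lemma histOf_rho (σ : (List (Fin 3) × Fin 3) → Fin 2 → ℝ) (hdet : IsDet σ) (n : ℕ) :
    histOf (rho σ hdet) n = hist σ hdet n := by
  induction n with
  | zero => simp [histOf, rho, hist]
  | succ n ih =>
    unfold histOf at ih ⊢
    refine Prod.ext ?_ rfl
    have h1 : (List.ofFn fun j : Fin (n + 1) => rho σ hdet j)
        = (List.ofFn fun j : Fin n => rho σ hdet j) ++ [rho σ hdet n] := by
      rw [List.ofFn_succ']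
      simp [List.concat_eq_append, Fin.last]
    simp only at h1 ⊢
    rw [h1]
    have h2 := congrArg Prod.fst ih
    simp only at h2
    rw [h2]
    rfl

lemma rho_induced (σ : (List (Fin 3) × Fin 3) → Fin 2 → ℝ) (hσ : IsSched σ)
    (hdet : IsDet σ) : IsInducedPath σ (rho σ hdet) := by
  constructor
  · rfl
  · intro i
    rw [histOf_rho]
    set h := hist σ hdet i with hh
    obtain ⟨ha1, ha0⟩ := (hdet h).choose_spec
    set a := (hdet h).choose with hadef
    have hen : 0 < ∑ t : Fin 3, P h.2 a t :=
      (hσ h).2.2 a (by rw [ha1]; norm_num)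
    have hP : P h.2 a (nxt h.2 a) = 1 := nxt_spec _ _ hen
    have hrho : rho σ hdet i = h.2 := rfl
    have hrho1 : rho σ hdet (i + 1) = nxt h.2 a := rfl
    have hterm : σ h a * P (rho σ hdet i) a (rho σ hdet (i + 1)) = 1 := by
      rw [hrho, hrho1, ha1, hP]; ring
    refine Finset.sum_pos' ?_ ⟨a, Finset.mem_univ a, by rw [hterm]; norm_num⟩
    intro b _
    exact mul_nonneg ((hσ h).1 b) (P_nonneg _ _ _)

lemma rho_unique (σ : (List (Fin 3) × Fin 3) → Fin 2 → ℝ) (hσ : IsSched σ)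
    (hdet : IsDet σ) (π : ℕ → Fin 3) (hπ : IsInducedPath σ π) :
    π = rho σ hdet := by
  obtain ⟨h0, hstep⟩ := hπ
  have key : ∀ n, π n = rho σ hdet n := by
    intro n
    induction n using Nat.strong_induction_on with
    | _ n ih =>
      match n with
      | 0 => exact h0
      | n + 1 =>
        have hhist : histOf π n = hist σ hdet n := by
          rw [histOf_congr π (rho σ hdet) n (fun j hj => ih j (Nat.lt_succ_of_le hj))]
          exact histOf_rho σ hdet n
        set h := hist σ hdet n with hh
        obtain ⟨ha1, ha0⟩ := (hdet h).choose_spec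
        set a := (hdet h).choose with hadef
        have hpos := hstep n
        rw [hhist] at hpos
        have hsum : (∑ b : Fin 2, σ h b * P (π n) b (π (n + 1)))
            = σ h a * P (π n) a (π (n + 1)) := by
          rw [Finset.sum_eq_single a]
          · intro b _ hb
            rw [ha0 b hb]; ring
          · intro hb; exact absurd (Finset.mem_univ a) hb
        rw [hsum, ha1, one_mul] at hpos
        have hπn : π n = h.2 := by
          rw [ih n (Nat.lt_succ_self n)]; rfl
        rw [hπn] at hpos
        have := nxt_uniq _ _ _ hpos
        rw [this]
        rfl
  funext n; exact key n

/-- Randomized schedulers are strictly more expressive than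
deterministic ones for PHL on the three-state MDP above:
(1) the uniform randomized scheduler induces a Markov chain containing both a path
whose state at index 1 is labelled `{a}` (is `s₁`) and a path whose state at index 1
is not, witnessing `∃σ.∃π₁:σ.∃π₂:σ. X(a_{π₁} ∧ ¬a_{π₂})`; and
(2) every deterministic scheduler induces a Markov chain with exactly one infinite
path, so no deterministic scheduler satisfies the formula. -/
theorem randomized_strictly_more_expressive_than_deterministic :
    (∃ π₁ π₂ : ℕ → Fin 3,
      IsInducedPath uniform π₁ ∧ IsInducedPath uniform π₂
      ∧ LabelA (π₁ 1) ∧ ¬ LabelA (π₂ 1))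
    ∧ (∀ σ : (List (Fin 3) × Fin 3) → Fin 2 → ℝ,
        IsSched σ → IsDet σ → ∃! π : ℕ → Fin 3, IsInducedPath σ π) := by
  constructor
  · refine ⟨fun n => if n = 0 then 0 else 1, fun n => if n = 0 then 0 else 2, ⟨rfl, ?_⟩,
      ⟨rfl, ?_⟩, by simp [LabelA], by simp [LabelA, Prod.ext_iff]⟩
    · intro i
      rcases i with _ | i <;>
        simp [uniform, Fin.sum_univ_two, P, Prod.ext_iff]
    · intro i
      rcases i with _ | i <;>
        simp [uniform, Fin.sum_univ_two, P, Prod.ext_iff]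
  · intro σ hσ hdet
    exact ⟨rho σ hdet, rho_induced σ hσ hdet, fun π hπ => rho_unique σ hσ hdet π hπ⟩

end PHLStmt15
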